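/- (Mediator density-ratio weighting identity.) Let Z ∈ {0,1}, D ∈ {0,1}, M discrete, X discrete, and Y integrable. Define π_z(x)=P(Z=z|X=x), p_{zd}(x)=P(D=d|Z=z,X=x), r_{zd}(m,x)=P(M=m|Z=z,D=d,X=x), μ_{zd}(m,x)=E[Y|Z=z,D=d,M=m,X=x], all strictly positive where needed. Then for any fixed z, z', d, d', E[ (1{Z=z, D=d}/(p_{zd}(X) π_z(X))) · (r_{z'd'}(M,X)/r_{zd}(M,X)) · Y ] = E[ Σ_m μ_{zd}(m, X) r_{z'd'}(m, X) ]. -/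

import Mathlib

open Finset Classical

/-- Probability of an event under a pmf on a finite sample space. -/
noncomputable def Pr {Ω : Type*} [Fintype Ω] (p : Ω → ℝ) (A : Ω → Prop) : ℝ :=
  ∑ ω, if A ω then p ω else 0

/-- Expectation under a pmf on a finite sample space. -/
noncomputable def Ex {Ω : Type*} [Fintype Ω] (p : Ω → ℝ) (f : Ω → ℝ) : ℝ :=
  ∑ ω, p ω * f ω


section Aux
variable {Ω : Type*} [Fintype Ω]

lemma Pr_nonneg (p : Ω → ℝ) (hp : ∀ ω, 0 ≤ p ω) (A : Ω → Prop) : 0 ≤ Pr p A := by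
  apply Finset.sum_nonneg
  intro ω _
  split_ifs
  · exact hp ω
  · exact le_refl 0

lemma Pr_mono (p : Ω → ℝ) (hp : ∀ ω, 0 ≤ p ω) {A B : Ω → Prop}
    (h : ∀ ω, A ω → B ω) : Pr p A ≤ Pr p B := by
  apply Finset.sum_le_sum
  intro ω _
  by_cases hA : A ω
  · simp [hA, h ω hA]
  · simp only [hA, if_false]
    split_ifs
    · exact hp ω
    · exact le_refl 0

lemma Pr_congr (p : Ω → ℝ) {A B : Ω → Prop} (h : ∀ ω, A ω ↔ B ω) :
    Pr p A = Pr p B :=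
  Finset.sum_congr rfl fun ω _ => by simp [h ω]

lemma Pr_eq_zero_imp (p : Ω → ℝ) (hp : ∀ ω, 0 ≤ p ω) {A : Ω → Prop}
    (h : Pr p A = 0) : ∀ ω, A ω → p ω = 0 := by
  intro ω hA
  have hnn : ∀ i ∈ Finset.univ, 0 ≤ (if A i then p i else 0) := by
    intro i _
    split_ifs
    · exact hp i
    · exact le_refl 0
  have := (Finset.sum_eq_zero_iff_of_nonneg hnn).mp h ω (Finset.mem_univ ω)
  simpa [hA] using this

lemma Pr_pos_exists (p : Ω → ℝ) {A : Ω → Prop} (h : 0 < Pr p A) : ∃ ω, A ω := by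
  by_contra hc
  push_neg at hc
  have : Pr p A = 0 := Finset.sum_eq_zero fun ω _ => by simp [hc ω]
  rw [this] at h
  exact lt_irrefl 0 h

end Aux

/-- Mediator density-ratio weighting identity:
`E[ 1{Z=z, D=d}/(p_{zd}(X)·π_z(X)) · (r_{z'd'}(M,X)/r_{zd}(M,X)) · Y ]
  = E[ Σ_m μ_{zd}(m,X) · r_{z'd'}(m,X) ]`,
where `π_z(x) = P(Z=z|X=x)`, `p_{zd}(x) = P(D=d|Z=z,X=x)`,
`r_{zd}(m,x) = P(M=m|Z=z,D=d,X=x)` and `μ_{zd}(m,x) = E[Y|Z=z,D=d,M=m,X=x]`,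
under the needed positivity conditions. -/
theorem mediator_density_ratio_weighting
    {Ω 𝒳 ℳ : Type*} [Fintype Ω] [Fintype 𝒳] [Fintype ℳ]
    (p : Ω → ℝ) (hp : ∀ ω, 0 ≤ p ω) (hpsum : ∑ ω, p ω = 1)
    (Z D : Ω → Bool) (M : Ω → ℳ) (X : Ω → 𝒳) (Y : Ω → ℝ)
    (z z' d d' : Bool)
    (πz pzd : 𝒳 → ℝ) (rzd rz'd' μzd : ℳ → 𝒳 → ℝ)
    (hπz : ∀ x, πz x =
      Pr p (fun ω => Z ω = z ∧ X ω = x) / Pr p (fun ω => X ω = x))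
    (hpzd : ∀ x, pzd x =
      Pr p (fun ω => D ω = d ∧ Z ω = z ∧ X ω = x) /
        Pr p (fun ω => Z ω = z ∧ X ω = x))
    (hrzd : ∀ m x, rzd m x =
      Pr p (fun ω => M ω = m ∧ Z ω = z ∧ D ω = d ∧ X ω = x) /
        Pr p (fun ω => Z ω = z ∧ D ω = d ∧ X ω = x))
    (hrz'd' : ∀ m x, rz'd' m x =
      Pr p (fun ω => M ω = m ∧ Z ω = z' ∧ D ω = d' ∧ X ω = x) /
        Pr p (fun ω => Z ω = z' ∧ D ω = d' ∧ X ω = x))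
    (hμzd : ∀ m x, μzd m x =
      Ex p (fun ω => if Z ω = z ∧ D ω = d ∧ M ω = m ∧ X ω = x then Y ω else 0) /
        Pr p (fun ω => Z ω = z ∧ D ω = d ∧ M ω = m ∧ X ω = x))
    -- positivity where needed
    (hpos : ∀ x, 0 < Pr p (fun ω => X ω = x) →
      (0 < Pr p (fun ω => Z ω = z' ∧ D ω = d' ∧ X ω = x) ∧
        ∀ m, 0 < Pr p (fun ω => Z ω = z ∧ D ω = d ∧ M ω = m ∧ X ω = x))) :
    Ex p (fun ω =>
        (if Z ω = z ∧ D ω = d then (1 : ℝ) else 0) / (pzd (X ω) * πz (X ω)) *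
          (rz'd' (M ω) (X ω) / rzd (M ω) (X ω)) * Y ω) =
      Ex p (fun ω => ∑ m, μzd m (X ω) * rz'd' m (X ω))  := by
  classical
  have expand : ∀ g : Ω → ℝ, Ex p g = ∑ x : 𝒳, ∑ ω, if X ω = x then p ω * g ω else 0 := by
    intro g
    rw [Finset.sum_comm]
    refine Finset.sum_congr rfl fun ω _ => ?_
    simp [Finset.sum_ite_eq]
  rw [expand, expand]
  refine Finset.sum_congr rfl fun x _ => ?_
  by_cases hx : 0 < Pr p (fun ω => X ω = x)
  swap
  · -- degenerate case: P(X = x) = 0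
    have h0 : Pr p (fun ω => X ω = x) = 0 :=
      le_antisymm (not_lt.mp hx) (Pr_nonneg p hp _)
    have hz := Pr_eq_zero_imp p hp h0
    refine Finset.sum_congr rfl fun ω _ => ?_
    by_cases hX : X ω = x
    · simp [hX, hz ω hX]
    · simp [hX]
  · obtain ⟨hQ3, hP4⟩ := hpos x hx
    obtain ⟨ω0, hω0⟩ := Pr_pos_exists p hQ3
    -- positivity chain
    have hP3 : 0 < Pr p (fun ω => Z ω = z ∧ D ω = d ∧ X ω = x) :=
      lt_of_lt_of_le (hP4 (M ω0))
        (Pr_mono p hp fun ω h => ⟨h.1, h.2.1, h.2.2.2⟩)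
    have hPZ : 0 < Pr p (fun ω => Z ω = z ∧ X ω = x) :=
      lt_of_lt_of_le hP3 (Pr_mono p hp fun ω h => ⟨h.1, h.2.2⟩)
    have hP1 := hx
    -- values of the conditional quantities at x
    have hπx : πz x = Pr p (fun ω => Z ω = z ∧ X ω = x) / Pr p (fun ω => X ω = x) := hπz x
    have hpzdx : pzd x = Pr p (fun ω => Z ω = z ∧ D ω = d ∧ X ω = x) /
        Pr p (fun ω => Z ω = z ∧ X ω = x) := by
      rw [hpzd x]
      congr 1
      exact Pr_congr p fun ω => by tauto
    have hrzdx : ∀ m, rzd m x = Pr p (fun ω => Z ω = z ∧ D ω = d ∧ M ω = m ∧ X ω = x) /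
        Pr p (fun ω => Z ω = z ∧ D ω = d ∧ X ω = x) := by
      intro m
      rw [hrzd m x]
      congr 1
      exact Pr_congr p fun ω => by tauto
    -- rewrite the LHS: substitute X ω = x
    have hL1 : (∑ ω, if X ω = x then p ω *
          ((if Z ω = z ∧ D ω = d then (1 : ℝ) else 0) / (pzd (X ω) * πz (X ω)) *
            (rz'd' (M ω) (X ω) / rzd (M ω) (X ω)) * Y ω) else 0)
        = ∑ m, ∑ ω, if M ω = m ∧ X ω = x then p ω *
          ((if Z ω = z ∧ D ω = d then (1 : ℝ) else 0) / (pzd x * πz x) *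
            (rz'd' m x / rzd m x) * Y ω) else 0 := by
      rw [Finset.sum_comm]
      refine Finset.sum_congr rfl fun ω _ => ?_
      by_cases hX : X ω = x
      · simp only [hX, and_true, if_true, Finset.sum_ite_eq]
        simp
      · simp [hX]
    rw [hL1]
    -- rewrite the RHS
    have hR : (∑ ω, if X ω = x then p ω * (∑ m, μzd m (X ω) * rz'd' m (X ω)) else 0)
        = ∑ m, Pr p (fun ω => X ω = x) * (μzd m x * rz'd' m x) := by
      have step : (∑ ω, if X ω = x then p ω * (∑ m, μzd m (X ω) * rz'd' m (X ω)) else 0)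
          = (∑ m, μzd m x * rz'd' m x) * Pr p (fun ω => X ω = x) := by
        rw [Pr, Finset.mul_sum]
        refine Finset.sum_congr rfl fun ω _ => ?_
        by_cases hX : X ω = x
        · rw [hX]; simp [mul_comm]
        · simp [hX]
      rw [step, Finset.sum_mul]
      exact Finset.sum_congr rfl fun m _ => by ring
    rw [hR]
    refine Finset.sum_congr rfl fun m _ => ?_
    -- per-(m,x) identity
    have hS : (∑ ω, if M ω = m ∧ X ω = x then p ω *
          ((if Z ω = z ∧ D ω = d then (1 : ℝ) else 0) / (pzd x * πz x) *
            (rz'd' m x / rzd m x) * Y ω) else 0)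
        = (rz'd' m x / (pzd x * πz x * rzd m x)) *
          Ex p (fun ω => if Z ω = z ∧ D ω = d ∧ M ω = m ∧ X ω = x then Y ω else 0) := by
      rw [Ex, Finset.mul_sum]
      refine Finset.sum_congr rfl fun ω _ => ?_
      by_cases h1 : M ω = m ∧ X ω = x
      · by_cases h2 : Z ω = z ∧ D ω = d
        · have h3 : Z ω = z ∧ D ω = d ∧ M ω = m ∧ X ω = x := ⟨h2.1, h2.2, h1.1, h1.2⟩
          simp only [h1, h2, h3, and_self, if_true]
          ring
        · have h3 : ¬(Z ω = z ∧ D ω = d ∧ M ω = m ∧ X ω = x) := fun h => h2 ⟨h.1, h.2.1⟩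
          simp [h1, h2, h3]
      · have h3 : ¬(Z ω = z ∧ D ω = d ∧ M ω = m ∧ X ω = x) := fun h => h1 ⟨h.2.2.1, h.2.2.2⟩
        simp [h1, h3]
    rw [hS]
    -- now pure field arithmetic
    have hμx := hμzd m x
    have hne1 : Pr p (fun ω => X ω = x) ≠ 0 := ne_of_gt hP1
    have hne2 : Pr p (fun ω => Z ω = z ∧ X ω = x) ≠ 0 := ne_of_gt hPZ
    have hne3 : Pr p (fun ω => Z ω = z ∧ D ω = d ∧ X ω = x) ≠ 0 := ne_of_gt hP3
    have hne4 : Pr p (fun ω => Z ω = z ∧ D ω = d ∧ M ω = m ∧ X ω = x) ≠ 0 := ne_of_gt (hP4 m)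
    rw [hμx, hπx, hpzdx, hrzdx m]
    field_simp
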